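/- Let s ≠ 0, τ, p, r be real, and let x₁,x₂,y₁,y₂,z₁,z₂,w₁,w₂,w₃ be complex numbers with w₃ ≠ 0 satisfying (y₂ + 2s)w₁ + x₁w₂ + z₁w₃ = 0, x₂w₁ + (y₁ + 2s)w₂ + z₂w₃ = 0, 2s·w₁w₂ − (x₁x₂ + z₁z₂) + τ = 0, x₁x₂ + y₁y₂ + 2z₁z₂ = 2p², and w₁w₂ + w₃²/2 − (y₁ + y₂)/2 = (p² − τ)/(2s) + s. Then 2s·w₃·w₁ = x₁z₂ − (y₁ + 2s)z₁ and 2s·w₃·w₂ = x₂z₁ − (y₂ + 2s)z₂. -/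

import Mathlib

/-- When `w₃ ≠ 0`, the equatorial components are recovered as
`2s·w₃·w₁ = x₁z₂ - (y₁ + 2s)z₁` and `2s·w₃·w₂ = x₂z₁ - (y₂ + 2s)z₂`. -/
theorem stmt_12
    (s τ p r : ℝ) (hs : s ≠ 0)
    (x₁ x₂ y₁ y₂ z₁ z₂ w₁ w₂ w₃ : ℂ) (hw₃ : w₃ ≠ 0)
    (heq₁ : (y₂ + 2 * (s : ℂ)) * w₁ + x₁ * w₂ + z₁ * w₃ = 0)
    (heq₂ : x₂ * w₁ + (y₁ + 2 * (s : ℂ)) * w₂ + z₂ * w₃ = 0)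
    (heq₄ : 2 * (s : ℂ) * (w₁ * w₂) - (x₁ * x₂ + z₁ * z₂) + (τ : ℂ) = 0)
    (hgeom₃ : x₁ * x₂ + y₁ * y₂ + 2 * z₁ * z₂ = ((2 * p ^ 2 : ℝ) : ℂ))
    (henergy : w₁ * w₂ + w₃ ^ 2 / 2 - (y₁ + y₂) / 2 =
      (((p ^ 2 - τ) / (2 * s) + s : ℝ) : ℂ)) :
    2 * (s : ℂ) * w₃ * w₁ = x₁ * z₂ - (y₁ + 2 * (s : ℂ)) * z₁ ∧
    2 * (s : ℂ) * w₃ * w₂ = x₂ * z₁ - (y₂ + 2 * (s : ℂ)) * z₂ := by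
  have hs' : (s : ℂ) ≠ 0 := by exact_mod_cast hs
  push_cast at hgeom₃ henergy
  have henergy' : 2 * (s : ℂ) * (w₁ * w₂ + w₃ ^ 2 / 2 - (y₁ + y₂) / 2) =
      2 * (s : ℂ) * ((p ^ 2 - τ) / (2 * s) + s) := by rw [henergy]
  have key : (y₁ + 2 * (s : ℂ)) * (y₂ + 2 * (s : ℂ)) - x₁ * x₂ =
      2 * (s : ℂ) * w₃ ^ 2 := by
    field_simp at henergy'
    linear_combination hgeom₃ + 2 * heq₄ - 2 * henergy'
  constructor
  · apply mul_right_cancel₀ hw₃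
    linear_combination (y₁ + 2 * (s : ℂ)) * heq₁ - x₁ * heq₂ - w₁ * key
  · apply mul_right_cancel₀ hw₃
    linear_combination (y₂ + 2 * (s : ℂ)) * heq₂ - x₂ * heq₁ - w₂ * key
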